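/- Let a > 0, γ > 1 and 0 < ρ̲ ≤ ρ̄. Then there exists a constant C̃₁ ∈ (0,1), depending only on a, γ, ρ̲ and ρ̄, such that for every ρ ≥ 0 and every s ∈ [ρ̲, ρ̄], C̃₁ · G(ρ,s) ≤ a (ρ^γ − s^γ)(ρ − s), where G(ρ,s) := (a/(γ−1)) · (ρ^γ + (γ−1) s^γ − γ s^{γ−1} ρ). -/

import Mathlib

private lemma rpow_sub_one_mul (x γ : ℝ) (hx : 0 ≤ x) (hγ : 0 < γ) :
    x ^ (γ - 1) * x = x ^ γ := by
  rcases eq_or_lt_of_le hx with h0 | h0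
  · rw [← h0, Real.zero_rpow hγ.ne', mul_zero]
  · rw [← Real.rpow_add_one h0.ne' (γ - 1)]; ring_nf

/-- Bernoulli / convexity: `y^γ + γ y^(γ-1)(x-y) ≤ x^γ`. -/
private lemma bern (γ x y : ℝ) (hγ : 1 < γ) (hx : 0 ≤ x) (hy : 0 ≤ y) :
    y ^ γ + γ * y ^ (γ - 1) * (x - y) ≤ x ^ γ := by
  rcases eq_or_lt_of_le hy with h0 | h0
  · rw [← h0, Real.zero_rpow (by linarith : (0:ℝ) < γ).ne',
      Real.zero_rpow (by linarith : (0:ℝ) < γ - 1).ne']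
    simpa using Real.rpow_nonneg hx γ
  · have hz : -1 ≤ x / y - 1 := by
      have : 0 ≤ x / y := div_nonneg hx h0.le
      linarith
    have hb := one_add_mul_self_le_rpow_one_add hz hγ.le
    have h1 : (1 : ℝ) + (x / y - 1) = x / y := by ring
    rw [h1] at hb
    have hyγ : 0 < y ^ γ := Real.rpow_pos_of_pos h0 γ
    have hb2 := mul_le_mul_of_nonneg_right hb hyγ.le
    have hkey : (x / y) ^ γ * y ^ γ = x ^ γ := by
      rw [← Real.mul_rpow (div_nonneg hx h0.le) h0.le, div_mul_cancel₀ _ h0.ne']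
    have hsm : y ^ (γ - 1) * y = y ^ γ := rpow_sub_one_mul y γ h0.le (by linarith)
    rw [hkey] at hb2
    have hdiv : y ^ γ * (x / y) = y ^ (γ - 1) * x := by
      field_simp
      rw [← hsm]; ring
    nlinarith [hb2, hdiv]

theorem potential_energy_density_le_pressure_difference
    (a γ ρlo ρhi : ℝ) (ha : 0 < a) (hγ : 1 < γ) (hlo : 0 < ρlo) (hlohi : ρlo ≤ ρhi) :
    ∃ C : ℝ, 0 < C ∧ C < 1 ∧ ∀ ρ : ℝ, 0 ≤ ρ → ∀ s ∈ Set.Icc ρlo ρhi,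
      C * (a / (γ - 1) * (ρ ^ γ + (γ - 1) * s ^ γ - γ * s ^ (γ - 1) * ρ)) ≤
        a * (ρ ^ γ - s ^ γ) * (ρ - s) := by
  have hγ0 : 0 < γ := by linarith
  have hγ1 : 0 < γ - 1 := by linarith
  refine ⟨min (1/2) ((γ - 1) * ρlo / γ), lt_min (by norm_num) (by positivity),
    lt_of_le_of_lt (min_le_left _ _) (by norm_num), ?_⟩
  intro ρ hρ s hs
  obtain ⟨hs1, hs2⟩ := hs
  have hs0 : 0 < s := lt_of_lt_of_le hlo hs1
  set C := min (1/2) ((γ - 1) * ρlo / γ) with hC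
  have hCpos : 0 < C := lt_min (by norm_num) (by positivity)
  have hCle : C ≤ (γ - 1) * ρlo / γ := min_le_right _ _
  have es : s ^ (γ - 1) * s = s ^ γ := rpow_sub_one_mul s γ hs0.le hγ0
  have eρ : ρ ^ (γ - 1) * ρ = ρ ^ γ := rpow_sub_one_mul ρ γ hρ hγ0
  set F : ℝ := ρ ^ γ + (γ - 1) * s ^ γ - γ * s ^ (γ - 1) * ρ with hF
  set H : ℝ := (ρ ^ γ - s ^ γ) * (ρ - s) with hH
  -- F ≥ 0
  have hF0 : 0 ≤ F := by
    have := bern γ ρ s hγ hρ hs0.le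
    rw [hF]; nlinarith [this, es]
  -- key1 : F ≤ γ * ((ρ^(γ-1) - s^(γ-1)) * (ρ - s))
  have key1 : F ≤ γ * ((ρ ^ (γ - 1) - s ^ (γ - 1)) * (ρ - s)) := by
    have := bern γ s ρ hγ hs0.le hρ
    rw [hF]; nlinarith [this, es, eρ]
  -- key2 : s * ((ρ^(γ-1) - s^(γ-1)) * (ρ - s)) ≤ H
  have key2 : s * ((ρ ^ (γ - 1) - s ^ (γ - 1)) * (ρ - s)) ≤ H := by
    rw [hH]
    nlinarith [mul_nonneg (Real.rpow_nonneg hρ (γ - 1)) (sq_nonneg (ρ - s)), es, eρ]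
  -- key4 : 0 ≤ (ρ^(γ-1) - s^(γ-1)) * (ρ - s)
  have key4 : 0 ≤ (ρ ^ (γ - 1) - s ^ (γ - 1)) * (ρ - s) := by
    rcases le_total s ρ with h | h
    · exact mul_nonneg (by simpa using Real.rpow_le_rpow hs0.le h hγ1.le) (by linarith)
    · have h1 : ρ ^ (γ - 1) ≤ s ^ (γ - 1) := Real.rpow_le_rpow hρ h hγ1.le
      nlinarith
  -- H ≥ 0
  have hH0 : 0 ≤ H := by
    rw [hH]
    rcases le_total s ρ with h | h
    · exact mul_nonneg (by simpa using Real.rpow_le_rpow hs0.le h hγ0.le) (by linarith)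
    · have h1 : ρ ^ γ ≤ s ^ γ := Real.rpow_le_rpow hρ h hγ0.le
      nlinarith
  -- main : ρlo * F ≤ γ * H
  have main : ρlo * F ≤ γ * H := by
    calc ρlo * F ≤ ρlo * (γ * ((ρ ^ (γ - 1) - s ^ (γ - 1)) * (ρ - s))) :=
          mul_le_mul_of_nonneg_left key1 hlo.le
      _ ≤ s * (γ * ((ρ ^ (γ - 1) - s ^ (γ - 1)) * (ρ - s))) := by
          apply mul_le_mul_of_nonneg_right hs1 (by positivity)
      _ = γ * (s * ((ρ ^ (γ - 1) - s ^ (γ - 1)) * (ρ - s))) := by ring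
      _ ≤ γ * H := mul_le_mul_of_nonneg_left key2 hγ0.le
  -- conclude
  have step1 : C * (a / (γ - 1) * F) ≤ (γ - 1) * ρlo / γ * (a / (γ - 1) * F) :=
    mul_le_mul_of_nonneg_right hCle (by positivity)
  have step2 : (γ - 1) * ρlo / γ * (a / (γ - 1) * F) = a / γ * (ρlo * F) := by
    field_simp
  have step3 : a / γ * (ρlo * F) ≤ a / γ * (γ * H) :=
    mul_le_mul_of_nonneg_left main (by positivity)
  have step4 : a / γ * (γ * H) = a * H := by field_simp
  have : a * H = a * (ρ ^ γ - s ^ γ) * (ρ - s) := by rw [hH]; ring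
  linarith [step1, step3]
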